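/- For any positive divisor p of n and 0 ≤ i ≤ n/p - 1, the monomial y^{v^(p)_i} = Π_{j=0}^{p-1} y_{i + (n/p)j} equals the circulant determinant Θ_p(y^(p)_i) of order p built from the variables y^(p)_{i,j} := Σ_{l=0}^{n/p - 1} ζ_n^{i(j + pl)} x_{j + pl} (0 ≤ j ≤ p-1). -/

import Mathlib

open MvPolynomial

section Circ

variable {R : Type*} [CommRing R] [IsDomain R]

lemma pow_mod_reduce {M : Type*} [CommMonoid M] (p : ℕ) (ω : M) (hω : ω ^ p = 1) (m : ℕ) :
    ω ^ m = ω ^ (m % p) := by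
  conv_lhs => rw [← Nat.div_add_mod m p]
  rw [pow_add, pow_mul, hω, one_pow, one_mul]

omit [IsDomain R] in
lemma pow_val_add {p : ℕ} [NeZero p] (ω : R) (hω : ω ^ p = 1) (x y : Fin p) :
    ω ^ (x + y).val = ω ^ x.val * ω ^ y.val := by
  rw [Fin.val_add, ← pow_mod_reduce p ω hω, pow_add]

lemma det_circulant_fact (p : ℕ) [NeZero p] (ω : R) (hω : IsPrimitiveRoot ω p) (a : ℕ → R) :
    (Matrix.circulant fun j : Fin p => a (j : ℕ)).det
      = ∏ j ∈ Finset.range p, ∑ k ∈ Finset.range p, ω ^ (j * k) * a k := by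
  have h1 : ω ^ p = 1 := hω.pow_eq_one
  set V : Matrix (Fin p) (Fin p) R := Matrix.vandermonde (fun j : Fin p => ω ^ ((-j : Fin p)).val)
    with hV
  set d : Fin p → R := fun m => ∑ t : Fin p, ω ^ ((m : ℕ) * (t : ℕ)) * a (t : ℕ) with hd
  have key : (Matrix.circulant fun j : Fin p => a (j : ℕ)) * V = V * Matrix.diagonal d := by
    ext j m
    rw [Matrix.mul_apply, Matrix.mul_diagonal]
    rw [← Equiv.sum_comp (Equiv.subLeft j)]
    simp only [Equiv.subLeft_apply, Matrix.circulant_apply, sub_sub_cancel,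
      Matrix.vandermonde_apply, hd, hV]
    rw [Finset.mul_sum]
    refine Finset.sum_congr rfl fun t _ => ?_
    have h2 : -(j - t) = t + (-j) := by rw [neg_sub, sub_eq_add_neg]
    rw [h2, pow_mul, pow_val_add ω h1 t (-j), mul_pow, ← pow_mul, ← pow_mul]
    ring
  have hVdet : V.det ≠ 0 := by
    rw [hV, Matrix.det_vandermonde_ne_zero_iff]
    intro x y hxy
    have := hω.pow_inj (Fin.is_lt _) (Fin.is_lt _) hxy
    exact neg_injective (Fin.val_injective this)
  have hdet := congrArg Matrix.det key
  rw [Matrix.det_mul, Matrix.det_mul, Matrix.det_diagonal, mul_comm V.det] at hdet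
  have hmain := mul_right_cancel₀ hVdet hdet
  rw [hmain]
  have hFin : ∀ m : Fin p, d m = ∑ k ∈ Finset.range p, ω ^ ((m : ℕ) * k) * a k := fun m =>
    Fin.sum_univ_eq_sum_range (fun t => ω ^ ((m : ℕ) * t) * a t) p
  rw [Finset.prod_congr rfl (fun m _ => hFin m)]
  exact Fin.prod_univ_eq_prod_range (fun j => ∑ k ∈ Finset.range p, ω ^ (j * k) * a k) p

end Circ

lemma zmod_sum_eq_range {A : Type*} [AddCommMonoid A] (n : ℕ) [NeZero n] (f : ZMod n → A) :
    ∑ m : ZMod n, f m = ∑ m ∈ Finset.range n, f (m : ZMod n) :=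
  Finset.sum_nbij' (i := fun m => m.val) (j := fun m => ((m : ℕ) : ZMod n))
    (fun m _ => Finset.mem_range.mpr (ZMod.val_lt m)) (fun _ _ => Finset.mem_univ _)
    (fun m _ => ZMod.natCast_rightInverse m)
    (fun a ha => ZMod.val_natCast_of_lt (Finset.mem_range.mp ha))
    (fun m _ => by rw [ZMod.natCast_rightInverse m])

/-- The eigenvariable `y_k = ∑_m ζ^{km} x_m`. -/
noncomputable def yEig (n : ℕ) [NeZero n] (ζ : ℂ) (k : ℕ) : MvPolynomial (ZMod n) ℂ :=
  ∑ m : ZMod n, C (ζ ^ (k * m.val)) * X m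

/-- The variable `y^(p)_{i,j} = ∑_{l<n/p} ζ^{i(j+pl)} x_{j+pl}`. -/
noncomputable def ypVar (n p : ℕ) [NeZero n] (ζ : ℂ) (i j : ℕ) :
    MvPolynomial (ZMod n) ℂ :=
  ∑ l ∈ Finset.range (n / p), C (ζ ^ (i * (j + p * l))) * X ((j + p * l : ℕ) : ZMod n)

/-- The circulant determinant of order `p` with first column `a_0, …, a_{p-1}`. -/
def thetaCirc {R : Type*} [CommRing R] (p : ℕ) (a : ℕ → R) : R :=
  (Matrix.circulant fun j : Fin p => a (j : ℕ)).det

lemma yEig_expand (n p : ℕ) [NeZero n] [NeZero p] (hpn : p ∣ n)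
    (ζ : ℂ) (hζ : IsPrimitiveRoot ζ n) (i j : ℕ) :
    yEig n ζ (i + (n / p) * j)
      = ∑ k ∈ Finset.range p, C (ζ ^ ((n / p) * (j * k))) * ypVar n p ζ i k := by
  have hnp : n / p * p = n := Nat.div_mul_cancel hpn
  have hpn' : p * (n / p) = n := Nat.mul_div_cancel' hpn
  have hp0 : 0 < p := NeZero.pos p
  rw [yEig, zmod_sum_eq_range]
  have hval : ∀ m ∈ Finset.range n,
      (C (ζ ^ ((i + n / p * j) * ((m : ZMod n)).val)) * X ((m : ℕ) : ZMod n)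
        : MvPolynomial (ZMod n) ℂ)
        = C (ζ ^ ((i + n / p * j) * m)) * X ((m : ℕ) : ZMod n) := by
    intro m hm
    rw [ZMod.val_natCast_of_lt (Finset.mem_range.mp hm)]
  rw [Finset.sum_congr rfl hval]
  have hsplit : ∑ m ∈ Finset.range n,
        (C (ζ ^ ((i + n / p * j) * m)) * X ((m : ℕ) : ZMod n) : MvPolynomial (ZMod n) ℂ)
      = ∑ x ∈ Finset.range p ×ˢ Finset.range (n / p),
        C (ζ ^ ((i + n / p * j) * (x.1 + p * x.2))) * X ((x.1 + p * x.2 : ℕ) : ZMod n) := by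
    refine Finset.sum_nbij' (i := fun m => (m % p, m / p)) (j := fun x => x.1 + p * x.2)
      ?_ ?_ ?_ ?_ ?_
    · intro m hm
      exact Finset.mem_product.mpr ⟨Finset.mem_range.mpr (Nat.mod_lt _ hp0),
        Finset.mem_range.mpr (Nat.div_lt_div_of_lt_of_dvd hpn (Finset.mem_range.mp hm))⟩
    · intro x hx
      obtain ⟨h1, h2⟩ := Finset.mem_product.mp hx
      have h1' := Finset.mem_range.mp h1
      have h2' := Finset.mem_range.mp h2
      have h3 : p * (x.2 + 1) ≤ p * (n / p) := Nat.mul_le_mul_left p h2'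
      have h4 : p * (x.2 + 1) = p * x.2 + p := by ring
      refine Finset.mem_range.mpr ?_
      show x.1 + p * x.2 < n
      omega
    · intro m _
      exact Nat.mod_add_div m p
    · intro x hx
      obtain ⟨h1, _⟩ := Finset.mem_product.mp hx
      have h1' := Finset.mem_range.mp h1
      have : (x.1 + p * x.2) % p = x.1 := by
        rw [Nat.add_mul_mod_self_left, Nat.mod_eq_of_lt h1']
      have hdiv : (x.1 + p * x.2) / p = x.2 := by
        rw [Nat.add_mul_div_left _ _ hp0, Nat.div_eq_of_lt h1', Nat.zero_add]
      exact Prod.ext this hdiv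
    · intro m _
      rw [Nat.mod_add_div m p]
  rw [hsplit, Finset.sum_product]
  simp only [ypVar]
  refine Finset.sum_congr rfl fun k hk => ?_
  rw [Finset.mul_sum]
  refine Finset.sum_congr rfl fun l hl => ?_
  rw [← mul_assoc, ← C_mul, ← pow_add]
  obtain ⟨q, hq⟩ := hpn
  have hqe : n / p = q := by rw [hq, Nat.mul_div_cancel_left _ hp0]
  have hexp : (i + n / p * j) * (k + p * l) = (n / p * (j * k) + i * (k + p * l)) + n * (j * l) := by
    rw [hqe, hq]; ring
  rw [hexp, pow_add, pow_mul, hζ.pow_eq_one, one_pow, mul_one]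

/-- For `p ∣ n` and `0 ≤ i < n/p`, the monomial `y^{v^(p)_i} = ∏_{j<p} y_{i+(n/p)j}`
equals the circulant determinant `Θ_p(y^(p)_i)`. -/
theorem stmt12 (n p : ℕ) [NeZero n] [NeZero p] (hpn : p ∣ n)
    (ζ : ℂ) (hζ : IsPrimitiveRoot ζ n) (i : ℕ) (hi : i < n / p) :
    ∏ j ∈ Finset.range p, yEig n ζ (i + (n / p) * j)
      = thetaCirc p (fun j => ypVar n p ζ i j) := by
  have hω0 : IsPrimitiveRoot (ζ ^ (n / p)) p :=
    hζ.pow (NeZero.pos n) (Nat.div_mul_cancel hpn).symm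
  have hω : IsPrimitiveRoot ((C (ζ ^ (n / p))) : MvPolynomial (ZMod n) ℂ) p :=
    hω0.map_of_injective (C_injective _ _)
  rw [thetaCirc, det_circulant_fact p _ hω]
  refine Finset.prod_congr rfl fun j _ => ?_
  rw [yEig_expand n p hpn ζ hζ i j]
  refine Finset.sum_congr rfl fun k _ => ?_
  rw [← C_pow, ← pow_mul]
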